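/- Let Λ be an index set and let D^{(0)} := B_Λ. Then for every i ≥ 0, the (i+1)-th derived distribution D^{(i+1)} is again a pattern subspace (the span of a subset of the standard basis {Ω̃_{ij} : 1 ≤ i < j ≤ n} ∪ {E_{k,n+1} : 1 ≤ k ≤ n}), provided D^{(i)} is; in particular, every derived distribution of a pattern subspace is a pattern subspace. -/

import Mathlib

open Matrix

/-!
Common setup: real (n+1)×(n+1) matrices (rows/columns indexed by `Fin (n+1)`,
where index `i : Fin n` cast via `Fin.castSucc` plays the role of `i ∈ {1,…,n}`
and `Fin.last n` plays the role of the index `n+1`), the Lie bracket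
`⁅A,B⁆ = A*B - B*A`, the matrices `Ω̃_{ij}` and `E_{k,n+1}`, the Lie algebra
`se(n)`, index sets `Λ`, pattern subspaces `B_Λ`, graphs with solid/broken
edges, the one-step transitive closure, and derived distributions.
-/

/-- The ambient space of real (n+1)×(n+1) matrices. -/
abbrev Mat (n : ℕ) := Matrix (Fin (n + 1)) (Fin (n + 1)) ℝ

/-- `Ω̃_{ij}`: 1 in entry (i,j), −1 in entry (j,i), 0 elsewhere (indices among 1,…,n). -/
def Omega {n : ℕ} (i j : Fin n) : Mat n :=
  Matrix.single i.castSucc j.castSucc 1 - Matrix.single j.castSucc i.castSucc 1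

/-- `E_{k,n+1}`: 1 in entry (k, n+1), 0 elsewhere. -/
def Ecol {n : ℕ} (k : Fin n) : Mat n :=
  Matrix.single k.castSucc (Fin.last n) 1

/-- The set se(n): matrices whose (n+1)-th row is zero and with
`M(i,j) = −M(j,i)` for all 1 ≤ i,j ≤ n. -/
def seSet (n : ℕ) : Set (Mat n) :=
  {M | (∀ j, M (Fin.last n) j = 0) ∧
    ∀ i j : Fin n, M i.castSucc j.castSucc = - M j.castSucc i.castSucc}

/-- se(n) as a real subspace of the (n+1)×(n+1) matrices. -/
def seL (n : ℕ) : Submodule ℝ (Mat n) where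
  carrier := seSet n
  add_mem' := by
    rintro a b ⟨ha1, ha2⟩ ⟨hb1, hb2⟩
    refine ⟨fun j => ?_, fun i j => ?_⟩
    · simp [Matrix.add_apply, ha1 j, hb1 j]
    · simp only [Matrix.add_apply, ha2 i j, hb2 i j]; ring
  zero_mem' := by
    refine ⟨fun j => ?_, fun i j => ?_⟩ <;> simp
  smul_mem' := by
    rintro c a ⟨ha1, ha2⟩
    refine ⟨fun j => ?_, fun i j => ?_⟩
    · simp [Matrix.smul_apply, ha1 j]
    · simp only [Matrix.smul_apply, ha2 i j, smul_neg]

/-- Kronecker delta (real-valued). -/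
def kron {n : ℕ} (p q : Fin n) : ℝ := if p = q then 1 else 0

/-- An index set Λ: a set of pairs (p,q) with p < q, i.e. a subset of
`{(i,j) : 1 ≤ i < j ≤ n} ∪ {(k, n+1) : 1 ≤ k ≤ n}`. -/
def IndexSet {n : ℕ} (Λ : Set (Fin (n + 1) × Fin (n + 1))) : Prop :=
  ∀ e ∈ Λ, e.1 < e.2

/-- The generating set `{Ω̃_{ij} : (i,j) ∈ Λ, j ≤ n} ∪ {E_{k,n+1} : (k,n+1) ∈ Λ}`. -/
def genSet {n : ℕ} (Λ : Set (Fin (n + 1) × Fin (n + 1))) : Set (Mat n) :=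
  {M | (∃ i j : Fin n, (i.castSucc, j.castSucc) ∈ Λ ∧ M = Omega i j) ∨
    (∃ k : Fin n, (k.castSucc, Fin.last n) ∈ Λ ∧ M = Ecol k)}

/-- The pattern subspace `B_Λ`. -/
def BLam {n : ℕ} (Λ : Set (Fin (n + 1) × Fin (n + 1))) : Submodule ℝ (Mat n) :=
  Submodule.span ℝ (genSet Λ)

attribute [local instance] LieRing.ofAssociativeRing

/-- `B_Λ` generates `se(n)` as a Lie algebra: the smallest real subspace containing
`B_Λ` and closed under the bracket (i.e. the Lie subalgebra generated by `B_Λ`)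
equals `se(n)`. -/
def GeneratesSE (n : ℕ) (Λ : Set (Fin (n + 1) × Fin (n + 1))) : Prop :=
  (LieSubalgebra.lieSpan ℝ (Mat n) (BLam Λ : Set (Mat n)) : Set (Mat n)) = seSet n

/-- A graph on vertices {1,…,n+1} recorded by its solid and broken adjacency relations. -/
structure SBGraph (n : ℕ) where
  solid : Fin (n + 1) → Fin (n + 1) → Prop
  broken : Fin (n + 1) → Fin (n + 1) → Prop

/-- A well-formed solid/broken graph: simple and symmetric; solid edges have both
endpoints among 1,…,n, broken edges have one endpoint equal to n+1. -/
def SBGraph.Good {n : ℕ} (G : SBGraph n) : Prop :=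
  (∀ p q, G.solid p q → G.solid q p) ∧ (∀ p q, G.solid p q → p ≠ q) ∧
  (∀ p q, G.solid p q → p ≠ Fin.last n ∧ q ≠ Fin.last n) ∧
  (∀ p q, G.broken p q → G.broken q p) ∧ (∀ p q, G.broken p q → p ≠ q) ∧
  (∀ p q, G.broken p q → p = Fin.last n ∨ q = Fin.last n)

/-- The one-step closure: for distinct vertices i,j,k, add a solid edge {i,k} whenever
{i,j} and {j,k} are both solid, and a broken edge {i,k} whenever one of {i,j},{j,k} is
solid and the other is broken (nothing is added when both are broken). -/
def SBGraph.step {n : ℕ} (G : SBGraph n) : SBGraph n where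
  solid := fun i k => G.solid i k ∨
    (∃ j, i ≠ j ∧ j ≠ k ∧ i ≠ k ∧ G.solid i j ∧ G.solid j k)
  broken := fun i k => G.broken i k ∨
    (∃ j, i ≠ j ∧ j ≠ k ∧ i ≠ k ∧
      ((G.solid i j ∧ G.broken j k) ∨ (G.broken i j ∧ G.solid j k)))

/-- The l-th transitive closure `G^{(l)}`. -/
def SBGraph.closure {n : ℕ} (G : SBGraph n) (l : ℕ) : SBGraph n :=
  (fun H => SBGraph.step H)^[l] G

/-- `G` is the complete graph on the n+1 vertices: every pair of distinct vertices
is joined by a (solid or broken) edge. -/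
def SBGraph.IsComplete {n : ℕ} (G : SBGraph n) : Prop :=
  ∀ p q : Fin (n + 1), p ≠ q → G.solid p q ∨ G.broken p q

/-- The graph `G(B_Λ)` associated with a pattern: solid edges {i,j} for (i,j) ∈ Λ with
j ≤ n, broken edges {k,n+1} for (k,n+1) ∈ Λ. -/
def patternGraph {n : ℕ} (Λ : Set (Fin (n + 1) × Fin (n + 1))) : SBGraph n where
  solid := fun p q => ∃ i j : Fin n, (i.castSucc, j.castSucc) ∈ Λ ∧
    ((p = i.castSucc ∧ q = j.castSucc) ∨ (p = j.castSucc ∧ q = i.castSucc))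
  broken := fun p q => ∃ k : Fin n, (k.castSucc, Fin.last n) ∈ Λ ∧
    ((p = k.castSucc ∧ q = Fin.last n) ∨ (p = Fin.last n ∧ q = k.castSucc))

/-- One step of the derived-distribution construction:
`D ↦ D + span{[A₁,A₂] : A₁,A₂ ∈ D}`. -/
def derivedStep {n : ℕ} (D : Submodule ℝ (Mat n)) : Submodule ℝ (Mat n) :=
  D ⊔ Submodule.span ℝ {M | ∃ A B, A ∈ D ∧ B ∈ D ∧ M = A * B - B * A}

/-- The i-th derived distribution `D^{(i)}`. -/
def derivedIter {n : ℕ} (D : Submodule ℝ (Mat n)) (i : ℕ) : Submodule ℝ (Mat n) :=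
  (fun S => derivedStep S)^[i] D

/-- `D` is a pattern subspace: the span of a subset of the standard basis
`{Ω̃_{ij} : 1 ≤ i < j ≤ n} ∪ {E_{k,n+1} : 1 ≤ k ≤ n}`, i.e. `D = B_Λ` for some index set Λ. -/
def IsPattern {n : ℕ} (D : Submodule ℝ (Mat n)) : Prop :=
  ∃ Λ : Set (Fin (n + 1) × Fin (n + 1)), IndexSet Λ ∧ D = BLam Λ

/-! ### Auxiliary development -/

section Aux

variable {n : ℕ}

lemma E_mul (a b c d : Fin (n+1)) :
    single a b (1:ℝ) * single c d 1 =
      if b = c then single a d 1 else 0 := by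
  split
  · next h => subst h; simp
  · next h => exact Matrix.single_mul_single_of_ne 1 a b c h 1

lemma omega_diag (i : Fin n) : Omega i i = 0 := sub_self _

lemma omega_swap (i j : Fin n) : Omega j i = -Omega i j := by
  simp [Omega]

lemma omega_bracket (i j k l : Fin n) :
    Omega i j * Omega k l - Omega k l * Omega i j =
      kron j k • Omega i l - kron i k • Omega j l - kron j l • Omega i k
        + kron i l • Omega j k := by
  simp only [Omega, sub_mul, mul_sub, E_mul, Fin.castSucc_inj, kron]
  by_cases hjk : j = k <;> by_cases hik : i = k <;> by_cases hjl : j = l <;>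
    by_cases hil : i = l <;> subst_vars <;>
    simp_all [eq_comm] <;> abel

lemma omega_ecol (i j k : Fin n) :
    Omega i j * Ecol k - Ecol k * Omega i j =
      kron j k • Ecol i - kron i k • Ecol j := by
  simp only [Omega, Ecol, sub_mul, mul_sub, E_mul, Fin.castSucc_inj, kron,
    (Fin.castSucc_lt_last _).ne', if_neg]
  by_cases hjk : j = k <;> by_cases hik : i = k <;> subst_vars <;> simp_all [eq_comm] <;> abel

lemma ecol_ecol (k l : Fin n) : Ecol k * Ecol l - Ecol l * Ecol k = 0 := by
  simp [Ecol, E_mul, (Fin.castSucc_lt_last _).ne']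

/-- unordered solid edge -/
def sEdge (Λ : Set (Fin (n + 1) × Fin (n + 1))) (i j : Fin n) : Prop :=
  (i.castSucc, j.castSucc) ∈ Λ ∨ (j.castSucc, i.castSucc) ∈ Λ

/-- broken edge -/
def bEdge (Λ : Set (Fin (n + 1) × Fin (n + 1))) (k : Fin n) : Prop :=
  (k.castSucc, Fin.last n) ∈ Λ

def sClos (Λ : Set (Fin (n + 1) × Fin (n + 1))) (i j : Fin n) : Prop :=
  sEdge Λ i j ∨ ∃ m, m ≠ i ∧ m ≠ j ∧ sEdge Λ i m ∧ sEdge Λ m j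

def bClos (Λ : Set (Fin (n + 1) × Fin (n + 1))) (k : Fin n) : Prop :=
  bEdge Λ k ∨ ∃ m, m ≠ k ∧ sEdge Λ k m ∧ bEdge Λ m

def Lam' (Λ : Set (Fin (n + 1) × Fin (n + 1))) : Set (Fin (n + 1) × Fin (n + 1)) :=
  {e | (∃ i j : Fin n, i < j ∧ sClos Λ i j ∧ e = (i.castSucc, j.castSucc)) ∨
    (∃ k : Fin n, bClos Λ k ∧ e = (k.castSucc, Fin.last n))}

lemma sEdge_symm {Λ : Set (Fin (n + 1) × Fin (n + 1))} {i j : Fin n}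
    (h : sEdge Λ i j) : sEdge Λ j i := h.elim Or.inr Or.inl

lemma sClos_symm {Λ : Set (Fin (n + 1) × Fin (n + 1))} {i j : Fin n}
    (h : sClos Λ i j) : sClos Λ j i := by
  rcases h with h | ⟨m, h1, h2, h3, h4⟩
  · exact Or.inl (sEdge_symm h)
  · exact Or.inr ⟨m, h2, h1, sEdge_symm h4, sEdge_symm h3⟩

lemma indexSet_Lam' (Λ : Set (Fin (n + 1) × Fin (n + 1))) : IndexSet (Lam' Λ) := by
  rintro e (⟨i, j, hij, -, rfl⟩ | ⟨k, -, rfl⟩)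
  · exact Fin.castSucc_lt_castSucc_iff.mpr hij
  · exact Fin.castSucc_lt_last k

lemma omega_mem_of_sClos {Λ : Set (Fin (n + 1) × Fin (n + 1))} {i j : Fin n}
    (h : i ≠ j → sClos Λ i j) : Omega i j ∈ BLam (Lam' Λ) := by
  by_cases hij : i = j
  · subst hij; rw [omega_diag]; exact zero_mem _
  rcases lt_or_gt_of_ne hij with hlt | hgt
  · exact Submodule.subset_span (Or.inl ⟨i, j, Or.inl ⟨i, j, hlt, h hij, rfl⟩, rfl⟩)
  · have : Omega j i ∈ BLam (Lam' Λ) :=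
      Submodule.subset_span (Or.inl ⟨j, i, Or.inl ⟨j, i, hgt, sClos_symm (h hij), rfl⟩, rfl⟩)
    have := neg_mem this
    rwa [← omega_swap] at this
    
lemma ecol_mem_of_bClos {Λ : Set (Fin (n + 1) × Fin (n + 1))} {k : Fin n}
    (h : bClos Λ k) : Ecol k ∈ BLam (Lam' Λ) :=
  Submodule.subset_span (Or.inr ⟨k, Or.inr ⟨k, h, rfl⟩, rfl⟩)

lemma omega_mem_of_sEdge {Λ : Set (Fin (n + 1) × Fin (n + 1))} {i j : Fin n}
    (h : sEdge Λ i j) : Omega i j ∈ BLam Λ := by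
  rcases h with h | h
  · exact Submodule.subset_span (Or.inl ⟨i, j, h, rfl⟩)
  · have : Omega j i ∈ BLam Λ := Submodule.subset_span (Or.inl ⟨j, i, h, rfl⟩)
    have := neg_mem this
    rwa [← omega_swap] at this

lemma ecol_mem_of_bEdge {Λ : Set (Fin (n + 1) × Fin (n + 1))} {k : Fin n}
    (h : bEdge Λ k) : Ecol k ∈ BLam Λ :=
  Submodule.subset_span (Or.inr ⟨k, h, rfl⟩)

lemma kron_smul_omega_mem {Λ : Set (Fin (n + 1) × Fin (n + 1))} {a b c d : Fin n}
    (h : a = b → c ≠ d → sClos Λ c d) : kron a b • Omega c d ∈ BLam (Lam' Λ) := by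
  by_cases hab : a = b
  · rw [kron, if_pos hab, one_smul]
    exact omega_mem_of_sClos (h hab)
  · rw [kron, if_neg hab, zero_smul]; exact zero_mem _

lemma kron_smul_ecol_mem {Λ : Set (Fin (n + 1) × Fin (n + 1))} {a b : Fin n} {c : Fin n}
    (h : a = b → bClos Λ c) : kron a b • Ecol c ∈ BLam (Lam' Λ) := by
  by_cases hab : a = b
  · rw [kron, if_pos hab, one_smul]; exact ecol_mem_of_bClos (h hab)
  · rw [kron, if_neg hab, zero_smul]; exact zero_mem _

lemma gen_bracket {Λ : Set (Fin (n + 1) × Fin (n + 1))} (hΛ : IndexSet Λ)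
    {A B : Mat n} (hA : A ∈ genSet Λ) (hB : B ∈ genSet Λ) :
    A * B - B * A ∈ BLam (Lam' Λ) := by
  rcases hA with ⟨i, j, hij, rfl⟩ | ⟨k0, hk0, rfl⟩
  · have hij' : i < j := Fin.castSucc_lt_castSucc_iff.mp (hΛ _ hij)
    rcases hB with ⟨k, l, hkl, rfl⟩ | ⟨k, hk, rfl⟩
    · have hkl' : k < l := Fin.castSucc_lt_castSucc_iff.mp (hΛ _ hkl)
      rw [omega_bracket]
      refine add_mem (sub_mem (sub_mem ?_ ?_) ?_) ?_
      · exact kron_smul_omega_mem (fun h _ => Or.inr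
          ⟨j, hij'.ne', fun hh => hkl'.ne (h ▸ hh), Or.inl hij, Or.inl (h ▸ hkl)⟩)
      · exact kron_smul_omega_mem (fun h _ => Or.inr
          ⟨i, hij'.ne, fun hh => hkl'.ne (h ▸ hh), sEdge_symm (Or.inl hij), Or.inl (h ▸ hkl)⟩)
      · exact kron_smul_omega_mem (fun h _ => Or.inr
          ⟨j, hij'.ne', fun hh => hkl'.ne' (h ▸ hh), Or.inl hij, sEdge_symm (Or.inl (h ▸ hkl))⟩)
      · exact kron_smul_omega_mem (fun h _ => Or.inr
          ⟨i, hij'.ne, fun hh => hkl'.ne' (h ▸ hh), sEdge_symm (Or.inl hij),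
            sEdge_symm (Or.inl (h ▸ hkl))⟩)
    · rw [omega_ecol]
      refine sub_mem ?_ ?_
      · exact kron_smul_ecol_mem (fun h => Or.inr ⟨j, hij'.ne', Or.inl hij, h ▸ hk⟩)
      · exact kron_smul_ecol_mem (fun h => Or.inr
          ⟨i, hij'.ne, sEdge_symm (Or.inl hij), h ▸ hk⟩)
  · rcases hB with ⟨i, j, hij, rfl⟩ | ⟨k, hk, rfl⟩
    · have hij' : i < j := Fin.castSucc_lt_castSucc_iff.mp (hΛ _ hij)
      have : -(Omega i j * Ecol k0 - Ecol k0 * Omega i j) ∈ BLam (Lam' Λ) := by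
        refine neg_mem ?_
        rw [omega_ecol]
        refine sub_mem ?_ ?_
        · exact kron_smul_ecol_mem (fun h => Or.inr ⟨j, hij'.ne', Or.inl hij, h ▸ hk0⟩)
        · exact kron_smul_ecol_mem (fun h => Or.inr
            ⟨i, hij'.ne, sEdge_symm (Or.inl hij), h ▸ hk0⟩)
      simpa [neg_sub] using this
    · rw [ecol_ecol]; exact zero_mem _

lemma bil_bracket {Λ : Set (Fin (n + 1) × Fin (n + 1))} (hΛ : IndexSet Λ)
    {A B : Mat n} (hA : A ∈ BLam Λ) (hB : B ∈ BLam Λ) :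
    A * B - B * A ∈ BLam (Lam' Λ) := by
  induction hA, hB using Submodule.span_induction₂ with
  | mem_mem x y hx hy => exact gen_bracket hΛ hx hy
  | zero_left y hy => simp
  | zero_right x hx => simp
  | add_left x y z hx hy hz h1 h2 =>
    have : (x + y) * z - z * (x + y) = (x * z - z * x) + (y * z - z * y) := by
      rw [add_mul, mul_add]; abel
    rw [this]; exact add_mem h1 h2
  | add_right x y z hx hy hz h1 h2 =>
    have : x * (y + z) - (y + z) * x = (x * y - y * x) + (x * z - z * x) := by
      rw [add_mul, mul_add]; abel
    rw [this]; exact add_mem h1 h2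
  | smul_left r x y hx hy h =>
    have : (r • x) * y - y * (r • x) = r • (x * y - y * x) := by
      rw [smul_mul_assoc, mul_smul_comm, smul_sub]
    rw [this]; exact Submodule.smul_mem _ _ h
  | smul_right r x y hx hy h =>
    have : x * (r • y) - (r • y) * x = r • (x * y - y * x) := by
      rw [smul_mul_assoc, mul_smul_comm, smul_sub]
    rw [this]; exact Submodule.smul_mem _ _ h

lemma main_eq {Λ : Set (Fin (n + 1) × Fin (n + 1))} (hΛ : IndexSet Λ) :
    derivedStep (BLam Λ) = BLam (Lam' Λ) := by
  apply le_antisymm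
  · refine sup_le ?_ ?_
    · refine Submodule.span_le.mpr ?_
      rintro M (⟨i, j, hij, rfl⟩ | ⟨k, hk, rfl⟩)
      · exact omega_mem_of_sClos (fun _ => Or.inl (Or.inl hij))
      · exact ecol_mem_of_bClos (Or.inl hk)
    · refine Submodule.span_le.mpr ?_
      rintro M ⟨A, B, hA, hB, rfl⟩
      exact bil_bracket hΛ hA hB
  · refine Submodule.span_le.mpr ?_
    rintro M (⟨a, b, hab, rfl⟩ | ⟨c, hc, rfl⟩)
    · rcases hab with ⟨i, j, hij, hcl, heq⟩ | ⟨k, -, heq⟩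
      · rw [Prod.mk.injEq, Fin.castSucc_inj, Fin.castSucc_inj] at heq
        obtain ⟨rfl, rfl⟩ := heq
        rcases hcl with hs | ⟨m, hmi, hmj, h1, h2⟩
        · exact Submodule.mem_sup_left (omega_mem_of_sEdge hs)
        · have hb := omega_bracket a m m b
          rw [kron, if_pos rfl, one_smul, kron, if_neg (Ne.symm hmi), zero_smul,
            kron, if_neg hmj, zero_smul, omega_diag, smul_zero] at hb
          have : Omega a b = Omega a m * Omega m b - Omega m b * Omega a m := by
            rw [hb]; abel
          rw [this]
          exact Submodule.mem_sup_right (Submodule.subset_span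
            ⟨Omega a m, Omega m b, omega_mem_of_sEdge h1, omega_mem_of_sEdge h2, rfl⟩)
      · exact absurd (congrArg Prod.snd heq) (by
          simpa using (Fin.castSucc_lt_last b).ne)
    · rcases hc with ⟨i, j, -, -, heq⟩ | ⟨k, hcl, heq⟩
      · exact absurd (congrArg Prod.snd heq).symm (by
          simpa using (Fin.castSucc_lt_last j).ne)
      · rw [Prod.mk.injEq, Fin.castSucc_inj] at heq
        obtain ⟨rfl, -⟩ := heq
        rcases hcl with hb | ⟨m, hmk, h1, h2⟩
        · exact Submodule.mem_sup_left (ecol_mem_of_bEdge hb)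
        · have he := omega_ecol c m m
          rw [kron, if_pos rfl, one_smul, kron, if_neg (Ne.symm hmk), zero_smul,
            sub_zero] at he
          rw [← he]
          exact Submodule.mem_sup_right (Submodule.subset_span
            ⟨Omega c m, Ecol m, omega_mem_of_sEdge h1, ecol_mem_of_bEdge h2, rfl⟩)

end Aux


/-- If D⁽ⁱ⁾ is a pattern subspace then so is D⁽ⁱ⁺¹⁾; in particular,
every derived distribution of a pattern subspace is a pattern subspace. -/
theorem stmt16 (n : ℕ) (hn : 1 ≤ n) :
    (∀ D : Submodule ℝ (Mat n), IsPattern D → IsPattern (derivedStep D)) ∧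
    (∀ Λ : Set (Fin (n + 1) × Fin (n + 1)), IndexSet Λ →
      ∀ i : ℕ, IsPattern (derivedIter (BLam Λ) i)) := by
  constructor
  · rintro D ⟨Λ, hΛ, rfl⟩
    exact ⟨Lam' Λ, indexSet_Lam' Λ, main_eq hΛ⟩
  · intro Λ hΛ i
    induction i with
    | zero => exact ⟨Λ, hΛ, rfl⟩
    | succ i ih =>
      obtain ⟨Λ', hΛ', hD⟩ := ih
      have : derivedIter (BLam Λ) (i + 1) = derivedStep (derivedIter (BLam Λ) i) :=
        Function.iterate_succ_apply' _ _ _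
      rw [this, hD]
      exact ⟨Lam' Λ', indexSet_Lam' Λ', main_eq hΛ'⟩
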